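/- There exists a constant C > 0 such that for all real x ≥ 2 and all real h with 1 ≤ h < x, |∫ₓ^{x+h} S_φ(t) dt − h x log x / ζ(2)| ≤ C (h² log x + x²). -/

import Mathlib

open Finset Filter MeasureTheory

/-- `S_φ(t) = ∑_{n ≤ t} φ(⌊t/n⌋)`, the sum over positive integers `n ≤ t`. -/
noncomputable def Sphi (t : ℝ) : ℝ :=
  ∑ n ∈ Finset.Icc 1 ⌊t⌋₊, (Nat.totient ⌊t / (n : ℝ)⌋₊ : ℝ)

open ArithmeticFunction

namespace Aux17

noncomputable def G (u : ℝ) : ℝ := Int.fract u * (Int.fract u - 1)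

lemma G_abs (u : ℝ) : |G u| ≤ 1/4 := by
  have h1 := Int.fract_nonneg u
  have h2 := Int.fract_lt_one u
  unfold G
  rw [abs_le]
  constructor <;> nlinarith [sq_nonneg (Int.fract u - 1/2)]

lemma fract_half (u : ℝ) (n : ℤ) : |Int.fract u - 1/2| ≤ |u - n - 1/2| := by
  have h1 := Int.fract_nonneg u
  have h2 := Int.fract_lt_one u
  have hb : |Int.fract u - 1/2| ≤ 1/2 := by
    rw [abs_le]; constructor <;> linarith
  have key : u - n - 1/2 = (Int.fract u - 1/2) + ((⌊u⌋ : ℝ) - n) := by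
    have := Int.floor_add_fract u
    push_cast
    linarith
  rcases lt_trichotomy (⌊u⌋ - n) 0 with hm | hm | hm
  · have hm' : ((⌊u⌋:ℝ) - n) ≤ -1 := by
      have : (⌊u⌋:ℤ) - n ≤ -1 := by omega
      exact_mod_cast this
    have : 1/2 ≤ -(u - n - 1/2) := by rw [key]; linarith
    calc |Int.fract u - 1/2| ≤ 1/2 := hb
      _ ≤ -(u - n - 1/2) := this
      _ ≤ |u - n - 1/2| := neg_le_abs _
  · have hm' : ((⌊u⌋:ℝ) - n) = 0 := by
      have : (⌊u⌋:ℤ) - n = 0 := hm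
      exact_mod_cast this
    rw [key, hm', add_zero]
  · have hm' : (1:ℝ) ≤ ((⌊u⌋:ℝ) - n) := by
      have : (1:ℤ) ≤ ⌊u⌋ - n := by omega
      exact_mod_cast this
    have : 1/2 ≤ u - n - 1/2 := by rw [key]; linarith
    calc |Int.fract u - 1/2| ≤ 1/2 := hb
      _ ≤ u - n - 1/2 := this
      _ ≤ |u - n - 1/2| := le_abs_self _

lemma G_eq_abs_sq (u : ℝ) : G u = |Int.fract u - 1/2|^2 - 1/4 := by
  rw [sq_abs]; unfold G; ring

lemma G_lip (u w : ℝ) : |G u - G w| ≤ |u - w| := by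
  set a := |Int.fract u - 1/2| with ha
  set c := |Int.fract w - 1/2| with hc
  have ha2 : a ≤ 1/2 := by
    rw [ha, abs_le]
    have := Int.fract_nonneg u; have := Int.fract_lt_one u
    constructor <;> linarith
  have hc2 : c ≤ 1/2 := by
    rw [hc, abs_le]
    have := Int.fract_nonneg w; have := Int.fract_lt_one w
    constructor <;> linarith
  have ha0 : 0 ≤ a := abs_nonneg _
  have hc0 : 0 ≤ c := abs_nonneg _
  have h1 : a ≤ |u - w| + c := by
    calc a ≤ |u - (⌊w⌋:ℝ) - 1/2| := fract_half u ⌊w⌋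
      _ = |(u - w) + (Int.fract w - 1/2)| := by
          rw [← Int.self_sub_floor w]; ring_nf
      _ ≤ |u - w| + c := abs_add_le _ _
  have h2 : c ≤ |u - w| + a := by
    calc c ≤ |w - (⌊u⌋:ℝ) - 1/2| := fract_half w ⌊u⌋
      _ = |(w - u) + (Int.fract u - 1/2)| := by
          rw [← Int.self_sub_floor u]; ring_nf
      _ ≤ |w - u| + a := abs_add_le _ _
      _ = |u - w| + a := by rw [abs_sub_comm]
  have key : G u - G w = (a - c) * (a + c) := by
    rw [G_eq_abs_sq, G_eq_abs_sq, ← ha, ← hc]; ring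
  rw [key, abs_mul]
  have h3 : |a - c| ≤ |u - w| := by
    rw [abs_le]; constructor <;> linarith
  have h4 : |a + c| ≤ 1 := by rw [abs_le]; constructor <;> linarith
  calc |a - c| * |a + c| ≤ |u - w| * 1 := by
        apply mul_le_mul h3 h4 (abs_nonneg _) (abs_nonneg _)
    _ = |u - w| := mul_one _

lemma G_cont : Continuous G := by
  have : LipschitzWith 1 G := by
    apply LipschitzWith.of_dist_le_mul
    intro u w
    rw [Real.dist_eq, Real.dist_eq, NNReal.coe_one, one_mul]
    exact G_lip u w
  exact this.continuous

noncomputable def P (J y : ℝ) : ℝ := y^2/(2*J) - y/2 - J/2 * G (y/J)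

lemma P_cont (J : ℝ) : Continuous (P J) := by
  unfold P
  apply Continuous.sub
  apply Continuous.sub
  · exact (continuous_pow 2).div_const _
  · exact continuous_id.div_const 2
  · exact continuous_const.mul (G_cont.comp (continuous_id.div_const J))

lemma integral_floor (J a b : ℝ) (hJ : 0 < J) (hab : a ≤ b) :
    ∫ t in a..b, ((⌊t/J⌋ : ℤ) : ℝ) = P J b - P J a := by
  apply intervalIntegral.integral_eq_sub_of_hasDeriv_right_of_le hab
    (P_cont J).continuousOn
  · intro t _
    set k : ℤ := ⌊t/J⌋ with hk
    have hkk : (k:ℝ) * J ≤ t := by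
      have := Int.floor_le (t/J)
      calc (k:ℝ) * J ≤ (t/J) * J := by
            apply mul_le_mul_of_nonneg_right this hJ.le
        _ = t := by field_simp
    have hk1 : t < ((k:ℝ)+1) * J := by
      have := Int.lt_floor_add_one (t/J)
      calc t = (t/J) * J := by field_simp
        _ < ((k:ℝ)+1) * J := by
            apply mul_lt_mul_of_pos_right _ hJ
            exact_mod_cast this
    have haff : HasDerivWithinAt (fun s => (k:ℝ)*s - J*((k:ℝ)^2+(k:ℝ))/2)
        ((k:ℝ)) (Set.Ioi t) t := by
      have : HasDerivAt (fun s => (k:ℝ)*s - J*((k:ℝ)^2+(k:ℝ))/2) ((k:ℝ)*1) t :=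
        ((hasDerivAt_id t).const_mul _).sub_const _
      simpa using this.hasDerivWithinAt
    have hPeq : ∀ s : ℝ, (k:ℝ)*J ≤ s → s < ((k:ℝ)+1)*J →
        P J s = (k:ℝ)*s - J*((k:ℝ)^2+(k:ℝ))/2 := by
      intro s hs1 hs2
      have hfl : ⌊s/J⌋ = k := by
        apply Int.floor_eq_iff.mpr
        constructor
        · rw [le_div_iff₀ hJ]; exact hs1
        · rw [div_lt_iff₀ hJ]; push_cast; exact hs2
      have hfr : Int.fract (s/J) = s/J - (k:ℝ) := by
        rw [Int.fract, hfl]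
      unfold P G
      rw [hfr]
      field_simp
      ring
    have hmem : Set.Iio (((k:ℝ)+1)*J) ∈ nhdsWithin t (Set.Ioi t) :=
      mem_nhdsWithin_of_mem_nhds (Iio_mem_nhds hk1)
    apply haff.congr_of_eventuallyEq
    · filter_upwards [hmem, self_mem_nhdsWithin] with s hs1 hs2
      exact hPeq s (le_trans hkk (le_of_lt hs2)) hs1
    · exact hPeq t hkk hk1
  · apply Monotone.intervalIntegrable
    intro s1 s2 hs
    have : ⌊s1/J⌋ ≤ ⌊s2/J⌋ := Int.floor_mono (by gcongr)
    show ((⌊s1/J⌋:ℤ):ℝ) ≤ ((⌊s2/J⌋:ℤ):ℝ)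
    exact_mod_cast this









lemma icc_range (f : ℕ → ℝ) (M : ℕ) :
    ∑ j ∈ Icc 1 M, f j = ∑ j ∈ range M, f (j+1) := by
  rw [← Finset.Ico_add_one_right_eq_Icc, Finset.sum_Ico_eq_sum_range]
  simp [add_comm]

lemma abel (A g : ℕ → ℝ) (M : ℕ) :
    ∑ j ∈ range M, (A (j+1) - A j) * g (j+1)
      = A M * g (M+1) - A 0 * g 1
        + ∑ j ∈ range M, A (j+1) * (g (j+1) - g (j+2)) := by
  have h := Finset.sum_range_sub (fun j => A j * g (j+1)) M
  have expand : ∀ j ∈ range M, (A (j+1) - A j) * g (j+1)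
      = (A (j+1) * g (j+1+1) - A j * g (j+1))
        + A (j+1) * (g (j+1) - g (j+2)) := by
    intro j _; ring
  rw [Finset.sum_congr rfl expand, Finset.sum_add_distrib, h]

/-- totient difference coefficient -/
noncomputable def b (j : ℕ) : ℝ := (Nat.totient j : ℝ) - (Nat.totient (j-1) : ℝ)

lemma b_succ (j : ℕ) : b (j+1) = (Nat.totient (j+1) : ℝ) - (Nat.totient j : ℝ) := by
  unfold b; simp

lemma sum_b (M : ℕ) : ∑ j ∈ Icc 1 M, b j = (Nat.totient M : ℝ) := by
  rw [icc_range]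
  simp only [b_succ]
  rw [Finset.sum_range_sub (fun j => (Nat.totient j : ℝ))]
  simp

lemma totient_partial_sum (k M : ℕ) (hk : k ≤ M) :
    (Nat.totient k : ℝ) = ∑ j ∈ Icc 1 M, b j * (if j ≤ k then (1:ℝ) else 0) := by
  have h1 : ∑ j ∈ Icc 1 M, b j * (if j ≤ k then (1:ℝ) else 0)
      = ∑ j ∈ (Icc 1 M).filter (· ≤ k), b j := by
    rw [Finset.sum_filter]
    apply Finset.sum_congr rfl
    intro j _
    by_cases hj : j ≤ k <;> simp [hj]
  have h2 : (Icc 1 M).filter (· ≤ k) = Icc 1 k := by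
    ext j
    simp only [Finset.mem_filter, Finset.mem_Icc]
    omega
  rw [h1, h2, ← sum_b k]

lemma sphi_eq (t : ℝ) (ht : 0 ≤ t) (M : ℕ) (hM : ⌊t⌋₊ ≤ M) :
    Sphi t = ∑ j ∈ Icc 1 M, b j * (⌊t / (j:ℝ)⌋₊ : ℝ) := by
  unfold Sphi
  have hfl : ∀ n ∈ Icc 1 ⌊t⌋₊, ⌊t / (n:ℝ)⌋₊ ≤ M := by
    intro n hn
    rw [Finset.mem_Icc] at hn
    have hd : t / (n:ℝ) ≤ t := div_le_self ht (by exact_mod_cast hn.1)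
    exact le_trans (Nat.floor_le_floor hd) hM
  rw [Finset.sum_congr rfl (fun n hn => totient_partial_sum _ M (hfl n hn))]
  rw [Finset.sum_comm]
  apply Finset.sum_congr rfl
  intro j hj
  rw [Finset.mem_Icc] at hj
  rw [← Finset.mul_sum]
  congr 1
  have hKN : ⌊t / (j:ℝ)⌋₊ ≤ ⌊t⌋₊ := by
    apply Nat.floor_le_floor
    apply div_le_self ht
    exact_mod_cast hj.1
  have hiff : ∀ n ∈ Icc 1 ⌊t⌋₊,
      (j ≤ ⌊t / (n:ℝ)⌋₊ ↔ n ≤ ⌊t / (j:ℝ)⌋₊) := by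
    intro n hn
    rw [Finset.mem_Icc] at hn
    have hn0 : (0:ℝ) < n := by exact_mod_cast hn.1
    have hj0 : (0:ℝ) < j := by exact_mod_cast hj.1
    rw [Nat.le_floor_iff (by positivity), Nat.le_floor_iff (by positivity)]
    rw [le_div_iff₀ hn0, le_div_iff₀ hj0]
    constructor <;> intro hh <;> nlinarith
  calc ∑ n ∈ Icc 1 ⌊t⌋₊, (if j ≤ ⌊t / (n:ℝ)⌋₊ then (1:ℝ) else 0)
      = ∑ n ∈ Icc 1 ⌊t⌋₊, (if n ≤ ⌊t / (j:ℝ)⌋₊ then (1:ℝ) else 0) := by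
        apply Finset.sum_congr rfl
        intro n hn
        simp only [hiff n hn]
    _ = ∑ n ∈ (Icc 1 ⌊t⌋₊).filter (· ≤ ⌊t / (j:ℝ)⌋₊), (1:ℝ) := by
        rw [Finset.sum_filter]
    _ = (⌊t / (j:ℝ)⌋₊ : ℝ) := by
        have : (Icc 1 ⌊t⌋₊).filter (· ≤ ⌊t / (j:ℝ)⌋₊) = Icc 1 ⌊t / (j:ℝ)⌋₊ := by
          ext n
          simp only [Finset.mem_filter, Finset.mem_Icc]
          omega
        rw [this, Finset.sum_const, Nat.card_Icc]
        simp

lemma sum_inv_sq (M : ℕ) (h : 1 ≤ M) :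
    ∑ d ∈ Icc 1 M, (1:ℝ)/(d:ℝ)^2 ≤ 2 - 1/M := by
  induction M with
  | zero => omega
  | succ M ih =>
    rcases Nat.eq_or_lt_of_le h with h1 | h1
    · simp [← h1]; norm_num
    · have hM : 1 ≤ M := by omega
      rw [← Finset.Ico_add_one_right_eq_Icc, Finset.sum_Ico_succ_top (by omega), Finset.Ico_add_one_right_eq_Icc]
      have hMR : (1:ℝ) ≤ M := by exact_mod_cast hM
      have step : (1:ℝ)/((M+1):ℝ)^2 ≤ 1/(M:ℝ) - 1/((M:ℝ)+1) := by
        rw [div_sub_div _ _ (by positivity) (by positivity)]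
        rw [div_le_div_iff₀ (by positivity) (by positivity)]
        ring_nf
        nlinarith
      have := ih hM
      push_cast
      push_cast at this step
      linarith

lemma one_le_sqrt {y : ℝ} (hy : 1 ≤ y) : 1 ≤ Real.sqrt y := by
  have h := Real.sq_sqrt (show (0:ℝ) ≤ y by linarith)
  nlinarith [Real.sqrt_nonneg y]

lemma log_le_two_sqrt {y : ℝ} (hy : 1 ≤ y) : Real.log y ≤ 2 * Real.sqrt y := by
  have h1 : Real.log (Real.sqrt y) = Real.log y / 2 := Real.log_sqrt (by linarith)
  have h2 : Real.log (Real.sqrt y) ≤ Real.sqrt y - 1 :=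
    Real.log_le_sub_one_of_pos (by linarith [one_le_sqrt hy])
  linarith

lemma sum_log_div_sq (M : ℕ) :
    ∑ d ∈ Icc 1 M, Real.log d/(d:ℝ)^2 ≤ 6 - 4/Real.sqrt M := by
  induction M with
  | zero => simp
  | succ M ih =>
    rw [← Finset.Ico_add_one_right_eq_Icc, Finset.sum_Ico_succ_top (by omega), Finset.Ico_add_one_right_eq_Icc]
    rcases Nat.eq_zero_or_pos M with h0 | hM
    · subst h0
      push_cast
      norm_num [Real.sqrt_one]
    · have hMR : (1:ℝ) ≤ (M:ℝ) := by exact_mod_cast hM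
      set s := Real.sqrt (M:ℝ) with hsdef
      set r := Real.sqrt ((M:ℝ)+1) with hrdef
      have hs1 : 1 ≤ s := one_le_sqrt hMR
      have hr1 : 1 ≤ r := one_le_sqrt (by linarith)
      have hs0 : 0 < s := by linarith
      have hr0 : 0 < r := by linarith
      have hs2 : s^2 = (M:ℝ) := Real.sq_sqrt (by positivity)
      have hr2 : r^2 = (M:ℝ)+1 := Real.sq_sqrt (by positivity)
      have hsr : s < r := by
        apply Real.sqrt_lt_sqrt (by positivity)
        linarith
      have hL : Real.log ((M:ℝ)+1) ≤ 2*r := log_le_two_sqrt (by linarith)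
      have hL0 : 0 ≤ Real.log ((M:ℝ)+1) := Real.log_nonneg (by linarith)
      have hdiff : r^2 - s^2 = 1 := by rw [hr2, hs2]; ring
      have hd1 : (r-s)*(r+s) = 1 := by linear_combination hdiff
      have e : 4*(r-s)*r^4*(r+s) = 4*r^4 := by linear_combination (4*r^4)*hd1
      have h6 : s*(r+s) ≤ 2*r^2 := by nlinarith
      have h6' : 2*s*r^2*(r+s) ≤ 4*r^4 := by nlinarith [mul_pos hr0 hr0]
      have h7 : 2*s*r^2 ≤ 4*(r-s)*r^4 := by
        nlinarith [e, h6', show (0:ℝ) < r+s by linarith]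
      have key : Real.log ((M:ℝ)+1) * (s * r) ≤ 4*(r-s)*(((M:ℝ)+1))^2 := by
        calc Real.log ((M:ℝ)+1) * (s * r) ≤ (2*r)*(s*r) := by
              apply mul_le_mul_of_nonneg_right hL (by positivity)
          _ = 2*s*r^2 := by ring
          _ ≤ 4*(r-s)*r^4 := h7
          _ = 4*(r-s)*(((M:ℝ)+1))^2 := by rw [← hr2]; ring
      have step : Real.log ((M:ℝ)+1)/(((M:ℝ)+1))^2 ≤ 4/s - 4/r := by
        rw [div_le_iff₀ (by positivity)]
        have h4 : 4/s - 4/r = 4*(r-s)/(s*r) := by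
          field_simp
        rw [h4, div_mul_eq_mul_div, le_div_iff₀ (by positivity)]
        calc Real.log ((M:ℝ)+1) * (s*r) ≤ 4*(r-s)*(((M:ℝ)+1))^2 := key
          _ = 4 * (r - s) * ((M:ℝ)+1) ^ 2 * 1 := by ring
          _ = _ := by ring_nf
      push_cast
      linarith [ih]







noncomputable def mf (n : ℕ) : ℝ := (moebius n : ℝ)/(n:ℝ)^2

lemma mf_term (n : ℕ) :
    LSeries.term (fun n => ((moebius n : ℤ) : ℂ)) 2 n = ((mf n : ℝ) : ℂ) := by
  rcases eq_or_ne n 0 with rfl | hn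
  · simp [mf]
  · rw [LSeries.term_of_ne_zero hn]
    have : (n:ℂ) ^ (2:ℂ) = ((n:ℝ):ℂ)^(2:ℕ) := by
      rw [show (2:ℂ) = ((2:ℕ):ℂ) by norm_num, Complex.cpow_natCast]
      norm_num
    rw [this]
    unfold mf
    push_cast
    ring

lemma mf_summable : Summable mf := by
  have h : LSeriesSummable (fun n => ((moebius n : ℤ) : ℂ)) 2 := by
    apply LSeriesSummable_moebius_iff.mpr
    norm_num
  unfold LSeriesSummable at h
  exact Complex.summable_ofReal.mp (h.congr mf_term)

lemma mf_tsum : ∑' n, mf n = 6/Real.pi^2 := by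
  have h2 : (1:ℝ) < (2:ℂ).re := by norm_num
  have hz : LSeries (fun n => ((ArithmeticFunction.zeta n : ℕ) : ℂ)) 2 = riemannZeta 2 :=
    LSeries_zeta_eq_riemannZeta h2
  have hmul := LSeries_zeta_mul_Lseries_moebius h2
  rw [hz, riemannZeta_two] at hmul
  have hpi : ((Real.pi:ℂ))^2/6 ≠ 0 := by
    simp only [ne_eq, div_eq_zero_iff]
    push_neg
    constructor
    · exact pow_ne_zero _ (by exact_mod_cast Real.pi_ne_zero)
    · norm_num
  have hpi2 : ((Real.pi:ℂ))^2 ≠ 0 := pow_ne_zero _ (by exact_mod_cast Real.pi_ne_zero)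
  have hL : LSeries (fun n => ((moebius n : ℤ) : ℂ)) 2 = 6/(Real.pi:ℂ)^2 := by
    field_simp at hmul
    rw [eq_div_iff hpi2]
    linear_combination hmul
  have hre : LSeries (fun n => ((moebius n : ℤ) : ℂ)) 2 = ((∑' n, mf n : ℝ) : ℂ) := by
    unfold LSeries
    rw [Complex.ofReal_tsum]
    exact tsum_congr mf_term
  rw [hre] at hL
  have : ((∑' n, mf n : ℝ) : ℂ) = (((6/Real.pi^2 : ℝ)) : ℂ) := by
    rw [hL]; push_cast; ring
  exact_mod_cast this

lemma inv_sq_tail (M : ℕ) (hM : 1 ≤ M) (s : Finset ℕ) :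
    ∑ k ∈ s, (1:ℝ)/((k+M+1):ℝ)^2 ≤ 1/M := by
  classical
  obtain ⟨N, hN⟩ : ∃ N, s ⊆ range N := ⟨s.sup _root_.id + 1, fun k hk =>
    Finset.mem_range.mpr (Nat.lt_succ_of_le (Finset.le_sup (f := _root_.id) hk))⟩
  have h1 : ∑ k ∈ s, (1:ℝ)/((k+M+1):ℝ)^2 ≤ ∑ k ∈ range N, (1:ℝ)/((k+M+1):ℝ)^2 :=
    Finset.sum_le_sum_of_subset_of_nonneg hN (fun k _ _ => by positivity)
  have h2 : ∀ k : ℕ, (1:ℝ)/((k+M+1):ℝ)^2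
      ≤ 1/((k+M):ℝ) - 1/((k+M+1):ℝ) := by
    intro k
    have hk0 : (1:ℝ) ≤ (k+M:ℝ) := by
      have : (1:ℕ) ≤ k + M := by omega
      exact_mod_cast this
    rw [div_sub_div _ _ (by positivity) (by positivity)]
    rw [div_le_div_iff₀ (by positivity) (by positivity)]
    ring_nf
    nlinarith
  have h3 : ∑ k ∈ range N, (1:ℝ)/((k+M+1):ℝ)^2
      ≤ ∑ k ∈ range N, (1/((k+M):ℝ) - 1/((k+M+1):ℝ)) :=
    Finset.sum_le_sum (fun k _ => h2 k)
  have h4 : ∑ k ∈ range N, (1/((k+M):ℝ) - 1/((k+M+1):ℝ)) = 1/(M:ℝ) - 1/((N+M):ℝ) := by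
    have e : ∀ k:ℕ, 1/((k:ℝ)+M) - 1/((k:ℝ)+M+1)
        = (fun i:ℕ => 1/((i:ℝ)+M)) k - (fun i:ℕ => 1/((i:ℝ)+M)) (k+1) := by
      intro k; push_cast; ring_nf
    rw [Finset.sum_congr rfl (fun k _ => e k),
      Finset.sum_range_sub' (fun i:ℕ => 1/((i:ℝ)+M)) N]
    push_cast
    norm_num
  have h5 : (0:ℝ) ≤ 1/((N+M):ℝ) := by positivity
  calc ∑ k ∈ s, (1:ℝ)/((k+M+1):ℝ)^2 ≤ _ := h1
    _ ≤ _ := h3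
    _ = 1/(M:ℝ) - 1/((N+M):ℝ) := h4
    _ ≤ 1/M := by linarith

lemma moebius_abs (n : ℕ) : |(moebius n : ℝ)| ≤ 1 := by
  have := ArithmeticFunction.abs_moebius_le_one (n := n)
  exact_mod_cast this

lemma moebius_partial (M : ℕ) (hM : 1 ≤ M) :
    |∑ d ∈ Icc 1 M, (moebius d : ℝ)/(d:ℝ)^2 - 6/Real.pi^2| ≤ 1/(M:ℝ) := by
  have hsum : ∑ d ∈ Icc 1 M, (moebius d : ℝ)/(d:ℝ)^2 = ∑ d ∈ range (M+1), mf d := by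
    have hins : range (M+1) = insert 0 (Icc 1 M) := by
      ext n; simp only [Finset.mem_range, Finset.mem_Icc, Finset.mem_insert]; omega
    rw [hins, Finset.sum_insert (by simp)]
    simp [mf]
  rw [hsum, ← mf_tsum]
  have htail : ∑ d ∈ range (M+1), mf d - ∑' n, mf n = -(∑' k, mf (k + (M+1))) := by
    have := Summable.sum_add_tsum_nat_add (M+1) mf_summable
    linarith
  rw [htail, abs_neg]
  have hs : Summable (fun k => mf (k + (M+1))) :=
    (summable_nat_add_iff (M+1)).mpr mf_summable
  have hb : ∀ k : ℕ, |mf (k + (M+1))| ≤ (1:ℝ)/((k+M+1 : ℕ):ℝ)^2 := by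
    intro k
    unfold mf
    rw [abs_div]
    have h1 : |((k + (M+1) : ℕ) : ℝ)^2| = ((k+M+1 : ℕ):ℝ)^2 := by
      rw [abs_of_nonneg (by positivity)]
      push_cast
      ring
    rw [h1]
    gcongr
    · exact moebius_abs _
  have habs : |∑' k, mf (k + (M+1))| ≤ ∑' k, |mf (k + (M+1))| := by
    have := norm_tsum_le_tsum_norm (f := fun k => mf (k + (M+1))) (by
      simpa [Real.norm_eq_abs] using hs.abs)
    simpa [Real.norm_eq_abs] using this
  have hle : ∑' k, |mf (k + (M+1))| ≤ 1/(M:ℝ) := by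
    apply Summable.tsum_le_of_sum_le hs.abs
    intro s
    calc ∑ k ∈ s, |mf (k+(M+1))|
        ≤ ∑ k ∈ s, (1:ℝ)/((k+M+1 : ℕ):ℝ)^2 := Finset.sum_le_sum (fun k _ => hb k)
      _ ≤ 1/(M:ℝ) := by
          have := inv_sq_tail M hM s
          convert this using 2 with k
          push_cast
          ring
  linarith







lemma swap_divisors (M : ℕ) (F : ℕ → ℕ → ℝ) :
    ∑ m ∈ Icc 1 M, ∑ p ∈ m.divisorsAntidiagonal, F p.1 p.2
      = ∑ d ∈ Icc 1 M, ∑ e ∈ Icc 1 (M / d), F d e := by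
  classical
  have h1 : ∑ m ∈ Icc 1 M, ∑ p ∈ m.divisorsAntidiagonal, F p.1 p.2
      = ∑ p ∈ (Icc 1 M).biUnion (fun m => m.divisorsAntidiagonal), F p.1 p.2 := by
    rw [Finset.sum_biUnion]
    intro m1 h1 m2 h2 hne
    simp only [Finset.disjoint_left]
    intro p hp1 hp2
    rw [Nat.mem_divisorsAntidiagonal] at hp1 hp2
    exact hne (by rw [← hp1.1, ← hp2.1])
  have h2 : ∑ d ∈ Icc 1 M, ∑ e ∈ Icc 1 (M / d), F d e
      = ∑ p ∈ (Icc 1 M).biUnion (fun d => {d} ×ˢ Icc 1 (M / d)), F p.1 p.2 := by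
    rw [Finset.sum_biUnion]
    · apply Finset.sum_congr rfl
      intro d _
      rw [Finset.singleton_product, Finset.sum_map]
      simp
    · intro d1 _ d2 _ hne
      simp only [Finset.disjoint_left]
      intro p hp1 hp2
      simp only [Finset.mem_product, Finset.mem_singleton] at hp1 hp2
      exact hne (by rw [← hp1.1, ← hp2.1])
  have h3 : (Icc 1 M).biUnion (fun m => m.divisorsAntidiagonal)
      = (Icc 1 M).biUnion (fun d => {d} ×ˢ Icc 1 (M / d)) := by
    ext ⟨d, e⟩
    simp only [Finset.mem_biUnion, Nat.mem_divisorsAntidiagonal, Finset.mem_product,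
      Finset.mem_singleton, Finset.mem_Icc]
    constructor
    · rintro ⟨m, ⟨hm1, hm2⟩, hprod, hm0⟩
      have hd0 : d ≠ 0 := by rintro rfl; simp at hprod; omega
      have he0 : e ≠ 0 := by rintro rfl; simp at hprod; omega
      have hdM : d ≤ M := by
        have : d ≤ d * e := Nat.le_mul_of_pos_right d (by omega)
        omega
      refine ⟨d, ⟨by omega, hdM⟩, rfl, by omega, ?_⟩
      rw [Nat.le_div_iff_mul_le (by omega)]
      have : e * d = m := by rw [mul_comm]; exact hprod
      omega
    · rintro ⟨d', ⟨hd1, hd2⟩, hdd, he1, he2⟩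
      subst hdd
      rw [Nat.le_div_iff_mul_le (by omega)] at he2
      have hprod : d * e ≤ M := by
        have : d * e = e * d := mul_comm d e
        omega
      refine ⟨d * e, ⟨?_, hprod⟩, rfl, ?_⟩
      · exact Nat.one_le_iff_ne_zero.mpr (Nat.mul_ne_zero (by omega) (by omega))
      · exact Nat.mul_ne_zero (by omega) (by omega)
  rw [h1, h2, h3]

lemma totient_inversion (m : ℕ) (hm : 0 < m) :
    (Nat.totient m : ℝ) = ∑ p ∈ m.divisorsAntidiagonal, (moebius p.1 : ℝ) * p.2 := by
  have key := (ArithmeticFunction.sum_eq_iff_sum_mul_moebius_eq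
    (R := ℝ) (f := fun n => (Nat.totient n : ℝ)) (g := fun n => (n : ℝ))).mp
  have h1 : ∀ n : ℕ, n > 0 → ∑ i ∈ n.divisors, (Nat.totient i : ℝ) = (n : ℝ) := by
    intro n _
    exact_mod_cast Nat.sum_totient n
  exact (key h1 m hm).symm

lemma totient_div_sq (m : ℕ) (hm : 0 < m) :
    (Nat.totient m : ℝ)/(m:ℝ)^2
      = ∑ p ∈ m.divisorsAntidiagonal, (moebius p.1 : ℝ)/((p.1:ℝ)^2 * p.2) := by
  rw [totient_inversion m hm, Finset.sum_div]
  apply Finset.sum_congr rfl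
  intro p hp
  rw [Nat.mem_divisorsAntidiagonal] at hp
  have hp1 : 0 < p.1 := Nat.pos_of_mem_divisors (Nat.fst_mem_divisors_of_mem_antidiagonal
    (by rw [Nat.mem_divisorsAntidiagonal]; exact hp))
  have hp2 : 0 < p.2 := Nat.pos_of_mem_divisors (Nat.snd_mem_divisors_of_mem_antidiagonal
    (by rw [Nat.mem_divisorsAntidiagonal]; exact hp))
  have hm' : (m:ℝ) = (p.1:ℝ) * p.2 := by
    have := hp.1.symm
    exact_mod_cast this
  rw [hm']
  have h1 : ((p.1:ℝ)) ≠ 0 := by positivity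
  have h2 : ((p.2:ℝ)) ≠ 0 := by positivity
  field_simp

lemma S'_eq (M : ℕ) :
    ∑ m ∈ Icc 1 M, (Nat.totient m : ℝ)/(m:ℝ)^2
      = ∑ d ∈ Icc 1 M, (moebius d : ℝ)/(d:ℝ)^2 * ∑ e ∈ Icc 1 (M / d), (1:ℝ)/e := by
  rw [Finset.sum_congr rfl (fun m hm => totient_div_sq m (by
    rw [Finset.mem_Icc] at hm; omega))]
  rw [swap_divisors M (fun d e => (moebius d : ℝ)/((d:ℝ)^2 * e))]
  apply Finset.sum_congr rfl
  intro d _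
  rw [Finset.mul_sum]
  apply Finset.sum_congr rfl
  intro e _
  field_simp

lemma harmonic_bounds (M d : ℕ) (hd : 1 ≤ d) (hdM : d ≤ M) :
    Real.log M - Real.log d ≤ ∑ e ∈ Icc 1 (M / d), (1:ℝ)/e ∧
    ∑ e ∈ Icc 1 (M / d), (1:ℝ)/e ≤ 1 + (Real.log M - Real.log d) := by
  have hH : ∑ e ∈ Icc 1 (M / d), (1:ℝ)/e = (harmonic (M/d) : ℝ) := by
    rw [harmonic_eq_sum_Icc]
    push_cast
    apply Finset.sum_congr rfl
    intro e _
    rw [one_div]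
  have hfl : ⌊(M:ℝ)/(d:ℝ)⌋₊ = M / d := by
    rw [Nat.floor_div_natCast, Nat.floor_natCast]
  have hd0 : (0:ℝ) < d := by exact_mod_cast hd
  have hM0 : (0:ℝ) < M := by exact_mod_cast lt_of_lt_of_le hd hdM
  have hyd : (1:ℝ) ≤ (M:ℝ)/(d:ℝ) := by
    rw [le_div_iff₀ hd0, one_mul]
    exact_mod_cast hdM
  have hlogdiv : Real.log ((M:ℝ)/(d:ℝ)) = Real.log M - Real.log d :=
    Real.log_div (by positivity) (by positivity)
  constructor
  · rw [hH, ← hlogdiv]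
    have := log_le_harmonic_floor ((M:ℝ)/d) (by positivity)
    rwa [hfl] at this
  · rw [hH, ← hlogdiv]
    have := harmonic_floor_le_one_add_log ((M:ℝ)/d) hyd
    rwa [hfl] at this

lemma S'_bound (M : ℕ) (hM : 2 ≤ M) :
    |∑ m ∈ Icc 1 M, (Nat.totient m : ℝ)/(m:ℝ)^2 - 6/Real.pi^2 * Real.log M| ≤ 9 := by
  rw [S'_eq]
  set H : ℕ → ℝ := fun d => ∑ e ∈ Icc 1 (M / d), (1:ℝ)/e with hHdef
  have hsplit : ∀ d ∈ Icc 1 M,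
      (moebius d : ℝ)/(d:ℝ)^2 * H d
        = Real.log M * ((moebius d : ℝ)/(d:ℝ)^2)
          - (moebius d : ℝ) * Real.log d/(d:ℝ)^2
          + (moebius d : ℝ)/(d:ℝ)^2 * (H d - (Real.log M - Real.log d)) := by
    intro d _
    ring
  rw [Finset.sum_congr rfl hsplit, Finset.sum_add_distrib, Finset.sum_sub_distrib,
    ← Finset.mul_sum]
  have h1 : |Real.log M * (∑ d ∈ Icc 1 M, (moebius d : ℝ)/(d:ℝ)^2)
      - 6/Real.pi^2 * Real.log M| ≤ 1 := by
    have hM1 : (1:ℕ) ≤ M := by omega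
    have hp := moebius_partial M hM1
    have hlogpos : 0 ≤ Real.log M := Real.log_nonneg (by exact_mod_cast hM1)
    have hlogM : Real.log M ≤ (M:ℝ) := by
      have := Real.log_le_sub_one_of_pos (show (0:ℝ) < M by positivity)
      linarith
    have e : Real.log M * (∑ d ∈ Icc 1 M, (moebius d : ℝ)/(d:ℝ)^2)
        - 6/Real.pi^2 * Real.log M
        = Real.log M * ((∑ d ∈ Icc 1 M, (moebius d : ℝ)/(d:ℝ)^2) - 6/Real.pi^2) := by
      ring
    rw [e, abs_mul, abs_of_nonneg hlogpos]
    calc Real.log M * |(∑ d ∈ Icc 1 M, (moebius d : ℝ)/(d:ℝ)^2) - 6/Real.pi^2|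
        ≤ (M:ℝ) * (1/(M:ℝ)) := by
          apply mul_le_mul hlogM hp (abs_nonneg _) (by positivity)
      _ = 1 := by field_simp
  have h2 : |∑ d ∈ Icc 1 M, (moebius d : ℝ) * Real.log d/(d:ℝ)^2| ≤ 6 := by
    calc |∑ d ∈ Icc 1 M, (moebius d : ℝ) * Real.log d/(d:ℝ)^2|
        ≤ ∑ d ∈ Icc 1 M, |(moebius d : ℝ) * Real.log d/(d:ℝ)^2| :=
          Finset.abs_sum_le_sum_abs _ _
      _ ≤ ∑ d ∈ Icc 1 M, Real.log d/(d:ℝ)^2 := by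
          apply Finset.sum_le_sum
          intro d hd
          rw [Finset.mem_Icc] at hd
          have hd1 : (1:ℝ) ≤ d := by exact_mod_cast hd.1
          have hlpos : 0 ≤ Real.log d := Real.log_nonneg hd1
          rw [abs_div, abs_mul, abs_of_nonneg hlpos, abs_of_nonneg (by positivity :
            (0:ℝ) ≤ (d:ℝ)^2)]
          gcongr
          nlinarith [moebius_abs d, hlpos, abs_nonneg ((moebius d:ℝ))]
      _ ≤ 6 - 4/Real.sqrt M := sum_log_div_sq M
      _ ≤ 6 := by
          have : 0 < Real.sqrt M := Real.sqrt_pos.mpr (by positivity)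
          have : 0 ≤ 4/Real.sqrt M := by positivity
          linarith
  have h3 : |∑ d ∈ Icc 1 M, (moebius d : ℝ)/(d:ℝ)^2 * (H d - (Real.log M - Real.log d))|
      ≤ 2 := by
    calc |∑ d ∈ Icc 1 M, (moebius d : ℝ)/(d:ℝ)^2 * (H d - (Real.log M - Real.log d))|
        ≤ ∑ d ∈ Icc 1 M, |(moebius d : ℝ)/(d:ℝ)^2 * (H d - (Real.log M - Real.log d))| :=
          Finset.abs_sum_le_sum_abs _ _
      _ ≤ ∑ d ∈ Icc 1 M, (1:ℝ)/(d:ℝ)^2 := by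
          apply Finset.sum_le_sum
          intro d hd
          rw [Finset.mem_Icc] at hd
          have hb := harmonic_bounds M d hd.1 hd.2
          have hE : |H d - (Real.log M - Real.log d)| ≤ 1 := by
            rw [abs_le]
            constructor <;> [linarith [hb.1]; linarith [hb.2]]
          rw [abs_mul, abs_div]
          have h1' : |(moebius d : ℝ)| ≤ 1 := moebius_abs d
          have h2' : |((d:ℝ))^2| = (d:ℝ)^2 := abs_of_nonneg (by positivity)
          rw [h2']
          have hd0 : (0:ℝ) < (d:ℝ)^2 := by
            have : (1:ℝ) ≤ d := by exact_mod_cast hd.1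
            positivity
          calc |(moebius d:ℝ)|/(d:ℝ)^2 * |H d - (Real.log M - Real.log d)|
              ≤ 1/(d:ℝ)^2 * 1 := by
                apply mul_le_mul _ hE (abs_nonneg _) (by positivity)
                gcongr
            _ = 1/(d:ℝ)^2 := mul_one _
      _ ≤ 2 - 1/(M:ℝ) := sum_inv_sq M (by omega)
      _ ≤ 2 := by
          have : 0 ≤ 1/(M:ℝ) := by positivity
          linarith
  have tri : ∀ a b c m : ℝ, |a - m| ≤ 1 → |b| ≤ 6 → |c| ≤ 2 → |a - b + c - m| ≤ 9 := by
    intro a b c m ha hb hc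
    have h1' := abs_le.mp ha
    have h2' := abs_le.mp hb
    have h3' := abs_le.mp hc
    rw [abs_le]
    constructor <;> linarith
  exact tri _ _ _ _ h1 h2 h3




lemma A_le (j : ℕ) : ((Nat.totient j : ℕ) : ℝ) ≤ (j:ℝ) := by
  exact_mod_cast Nat.totient_le j

lemma T_bound (M : ℕ) (y xr : ℝ) (h0y : 0 ≤ y) (hy : y ≤ 2*xr)
    (hMx : (M:ℝ) ≤ 2*xr) (hx1 : 1 ≤ xr) :
    |∑ j ∈ Icc 1 M, b j * ((j:ℝ) * G (y/(j:ℝ)))| ≤ 7*xr^2 := by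
  set A : ℕ → ℝ := fun j => (Nat.totient j : ℝ) with hA
  set g : ℕ → ℝ := fun j => (j:ℝ) * G (y/(j:ℝ)) with hg
  have e1 : ∑ j ∈ Icc 1 M, b j * ((j:ℝ) * G (y/(j:ℝ)))
      = ∑ j ∈ range M, (A (j+1) - A j) * g (j+1) := by
    rw [icc_range]
    apply Finset.sum_congr rfl
    intro j _
    rw [b_succ]
  rw [e1, abel]
  have hA0 : A 0 = 0 := by simp [hA]
  have hAnn : ∀ j, 0 ≤ A j := fun j => by positivity
  have hgabs : ∀ j : ℕ, |g j| ≤ (j:ℝ)/4 := by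
    intro j
    rw [hg]
    simp only []
    rw [abs_mul, abs_of_nonneg (by positivity : (0:ℝ) ≤ (j:ℝ))]
    calc (j:ℝ) * |G (y/(j:ℝ))| ≤ (j:ℝ) * (1/4) :=
        mul_le_mul_of_nonneg_left (G_abs _) (by positivity)
      _ = (j:ℝ)/4 := by ring
  have hdiff : ∀ j : ℕ, |g (j+1) - g (j+2)| ≤ 1/4 + y/((j:ℝ)+2) := by
    intro j
    have e : g (j+1) - g (j+2)
        = ((j:ℝ)+1) * (G (y/((j:ℝ)+1)) - G (y/((j:ℝ)+2))) - G (y/((j:ℝ)+2)) := by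
      rw [hg]
      simp only []
      push_cast
      ring
    rw [e]
    have h1 : |G (y/((j:ℝ)+1)) - G (y/((j:ℝ)+2))| ≤ y/(((j:ℝ)+1)*((j:ℝ)+2)) := by
      refine (G_lip _ _).trans (le_of_eq ?_)
      rw [abs_of_nonneg]
      · rw [div_sub_div _ _ (by positivity) (by positivity)]
        congr 1
        ring
      · rw [sub_nonneg]
        apply div_le_div_of_nonneg_left h0y (by positivity)
        linarith
    calc |((j:ℝ)+1) * (G (y/((j:ℝ)+1)) - G (y/((j:ℝ)+2))) - G (y/((j:ℝ)+2))|
        ≤ |((j:ℝ)+1) * (G (y/((j:ℝ)+1)) - G (y/((j:ℝ)+2)))| + |G (y/((j:ℝ)+2))| :=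
          abs_sub _ _
      _ ≤ ((j:ℝ)+1) * (y/(((j:ℝ)+1)*((j:ℝ)+2))) + 1/4 := by
          rw [abs_mul, abs_of_nonneg (by positivity : (0:ℝ) ≤ (j:ℝ)+1)]
          have := mul_le_mul_of_nonneg_left h1 (by positivity : (0:ℝ) ≤ (j:ℝ)+1)
          linarith [G_abs (y/((j:ℝ)+2))]
      _ = 1/4 + y/((j:ℝ)+2) := by
          field_simp
          ring
  have hsum : |∑ j ∈ range M, A (j+1) * (g (j+1) - g (j+2))|
      ≤ (M:ℝ) * ((M:ℝ)/4 + y) := by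
    calc |∑ j ∈ range M, A (j+1) * (g (j+1) - g (j+2))|
        ≤ ∑ j ∈ range M, |A (j+1) * (g (j+1) - g (j+2))| :=
          Finset.abs_sum_le_sum_abs _ _
      _ ≤ ∑ j ∈ range M, ((M:ℝ)/4 + y) := by
          apply Finset.sum_le_sum
          intro j hj
          have hjM : (j:ℝ)+1 ≤ (M:ℝ) := by
            have := Finset.mem_range.mp hj
            exact_mod_cast Nat.succ_le_of_lt this
          have hA1 : A (j+1) ≤ (j:ℝ)+1 := by
            rw [hA]
            have := A_le (j+1)
            push_cast at this ⊢
            linarith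
          have hd := hdiff j
          have hfrac : ((j:ℝ)+1) * (y/((j:ℝ)+2)) ≤ y := by
            rw [mul_div_assoc']
            rw [div_le_iff₀ (by positivity)]
            nlinarith
          rw [abs_mul, abs_of_nonneg (hAnn _)]
          calc A (j+1) * |g (j+1) - g (j+2)|
              ≤ ((j:ℝ)+1) * (1/4 + y/((j:ℝ)+2)) :=
                mul_le_mul hA1 hd (abs_nonneg _) (by positivity)
            _ = ((j:ℝ)+1)/4 + ((j:ℝ)+1) * (y/((j:ℝ)+2)) := by ring
            _ ≤ (M:ℝ)/4 + y := by linarith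
      _ = (M:ℝ) * ((M:ℝ)/4 + y) := by
          rw [Finset.sum_const, Finset.card_range, nsmul_eq_mul]
  have hAM : |A M * g (M+1) - A 0 * g 1| ≤ (M:ℝ) * (((M:ℝ)+1)/4) := by
    rw [hA0, zero_mul, sub_zero, abs_mul, abs_of_nonneg (hAnn _)]
    have h1 : A M ≤ (M:ℝ) := A_le M
    have h2 := hgabs (M+1)
    have h2' : |g (M+1)| ≤ ((M:ℝ)+1)/4 := by
      push_cast at h2
      linarith
    apply mul_le_mul h1 h2' (abs_nonneg _) (by positivity)
  calc |A M * g (M+1) - A 0 * g 1 + ∑ j ∈ range M, A (j+1) * (g (j+1) - g (j+2))|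
      ≤ |A M * g (M+1) - A 0 * g 1| + |∑ j ∈ range M, A (j+1) * (g (j+1) - g (j+2))| :=
        abs_add_le _ _
    _ ≤ (M:ℝ) * (((M:ℝ)+1)/4) + (M:ℝ) * ((M:ℝ)/4 + y) := by linarith
    _ ≤ 7*xr^2 := by nlinarith [hMx, hy, hx1, h0y, Nat.cast_nonneg (α := ℝ) M]

lemma SM_bound (M : ℕ) (hM : 2 ≤ M) :
    |∑ j ∈ Icc 1 M, b j * (1/(j:ℝ)) - 6/Real.pi^2 * Real.log M| ≤ 12 := by
  set A : ℕ → ℝ := fun j => (Nat.totient j : ℝ) with hA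
  set g : ℕ → ℝ := fun j => 1/(j:ℝ) with hg
  have e1 : ∑ j ∈ Icc 1 M, b j * (1/(j:ℝ))
      = ∑ j ∈ range M, (A (j+1) - A j) * g (j+1) := by
    rw [icc_range]
    apply Finset.sum_congr rfl
    intro j _
    rw [b_succ]
  rw [e1, abel]
  have hA0 : A 0 = 0 := by simp [hA]
  have hAnn : ∀ j, 0 ≤ A j := fun j => by positivity
  have hS' := S'_bound M hM
  have hS'e : ∑ m ∈ Icc 1 M, (Nat.totient m : ℝ)/(m:ℝ)^2
      = ∑ j ∈ range M, A (j+1)/(((j:ℝ)+1)^2) := by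
    rw [icc_range]
    apply Finset.sum_congr rfl
    intro j _
    rw [hA]
    push_cast
    ring
  have hterm : ∀ j ∈ range M,
      |A (j+1) * (g (j+1) - g (j+2)) - A (j+1)/(((j:ℝ)+1)^2)| ≤ 1/(((j:ℝ)+1)^2) := by
    intro j _
    have e : A (j+1) * (g (j+1) - g (j+2)) - A (j+1)/(((j:ℝ)+1)^2)
        = -(A (j+1) * (1/((((j:ℝ)+1)^2) * (((j:ℝ)+2))))) := by
      rw [hg]
      simp only []
      push_cast
      field_simp
      ring
    rw [e, abs_neg, abs_mul, abs_of_nonneg (hAnn _),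
      abs_of_nonneg (by positivity : (0:ℝ) ≤ 1/((((j:ℝ)+1)^2) * (((j:ℝ)+2))))]
    have hA1 : A (j+1) ≤ (j:ℝ)+1 := by
      have := A_le (j+1)
      rw [hA]
      push_cast at this ⊢
      linarith
    calc A (j+1) * (1/((((j:ℝ)+1)^2) * (((j:ℝ)+2))))
        ≤ (((j:ℝ)+1)) * (1/((((j:ℝ)+1)^2) * (((j:ℝ)+2)))) :=
          mul_le_mul_of_nonneg_right hA1 (by positivity)
      _ ≤ 1/(((j:ℝ)+1)^2) := by
          rw [mul_one_div, div_le_div_iff₀ (by positivity) (by positivity)]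
          nlinarith
  have hinv : ∑ j ∈ range M, 1/(((j:ℝ)+1)^2) ≤ 2 := by
    have h := sum_inv_sq M (by omega)
    have e : ∑ d ∈ Icc 1 M, (1:ℝ)/(d:ℝ)^2 = ∑ j ∈ range M, 1/(((j:ℝ)+1)^2) := by
      rw [icc_range]
      apply Finset.sum_congr rfl
      intro j _
      push_cast
      ring
    rw [← e]
    have : (0:ℝ) ≤ 1/(M:ℝ) := by positivity
    linarith
  have hmid : |∑ j ∈ range M, A (j+1) * (g (j+1) - g (j+2))
      - ∑ m ∈ Icc 1 M, (Nat.totient m : ℝ)/(m:ℝ)^2| ≤ 2 := by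
    rw [hS'e, ← Finset.sum_sub_distrib]
    calc |∑ j ∈ range M, (A (j+1) * (g (j+1) - g (j+2)) - A (j+1)/(((j:ℝ)+1)^2))|
        ≤ ∑ j ∈ range M, |A (j+1) * (g (j+1) - g (j+2)) - A (j+1)/(((j:ℝ)+1)^2)| :=
          Finset.abs_sum_le_sum_abs _ _
      _ ≤ ∑ j ∈ range M, 1/(((j:ℝ)+1)^2) := Finset.sum_le_sum hterm
      _ ≤ 2 := hinv
  have hAM : |A M * g (M+1) - A 0 * g 1| ≤ 1 := by
    rw [hA0, zero_mul, sub_zero, abs_mul]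
    have h1 : |A M| ≤ (M:ℝ) := by rw [abs_of_nonneg (hAnn _)]; exact A_le M
    have h2 : |g (M+1)| ≤ 1/(M:ℝ) := by
      rw [hg]
      simp only []
      rw [abs_of_nonneg (by positivity)]
      apply div_le_div_of_nonneg_left (by norm_num) (by positivity : (0:ℝ) < (M:ℝ))
      push_cast
      linarith
    have hM0 : (0:ℝ) < M := by positivity
    calc |A M| * |g (M+1)| ≤ (M:ℝ) * (1/(M:ℝ)) :=
        mul_le_mul h1 h2 (abs_nonneg _) (by positivity)
      _ = 1 := by field_simp
  have tri : ∀ a s s' m : ℝ, |a| ≤ 1 → |s - s'| ≤ 2 → |s' - m| ≤ 9 → |a + s - m| ≤ 12 := by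
    intro a s s' m h1 h2 h3
    have e1 := abs_le.mp h1
    have e2 := abs_le.mp h2
    have e3 := abs_le.mp h3
    rw [abs_le]
    constructor <;> linarith
  exact tri _ _ _ _ hAM hmid hS'

end Aux17

set_option maxHeartbeats 2000000 in
open Aux17 in
/-- For all `x ≥ 2` and `1 ≤ h < x`:
`∫ₓ^{x+h} S_φ(t) dt = h x log x / ζ(2) + O(h² log x + x²)`, where `ζ(2) = π²/6`. -/
theorem stmt17 :
    ∃ C : ℝ, 0 < C ∧ ∀ x : ℝ, 2 ≤ x → ∀ h : ℝ, 1 ≤ h → h < x →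
      |(∫ t in x..(x + h), Sphi t) - h * x * Real.log x / (Real.pi ^ 2 / 6)|
        ≤ C * (h ^ 2 * Real.log x + x ^ 2) := by
  refine ⟨100, by norm_num, ?_⟩
  intro x hx h h1 hhx
  set v := x + h with hv
  have hx0 : (0:ℝ) < x := by linarith
  have hxv : x ≤ v := by rw [hv]; linarith
  have hv0 : (0:ℝ) < v := by linarith
  have hv2x : v ≤ 2*x := by rw [hv]; linarith
  set M := ⌊v⌋₊ with hMdef
  have hMv : (M:ℝ) ≤ v := Nat.floor_le hv0.le
  have hvM1 : v < (M:ℝ) + 1 := Nat.lt_floor_add_one v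
  have hxM : x ≤ (M:ℝ) := by
    have : x ≤ v - 1 := by rw [hv]; linarith
    linarith
  have hM2 : 2 ≤ M := by
    have : (2:ℝ) ≤ (M:ℝ) := le_trans hx hxM
    exact_mod_cast this
  have hM2x : (M:ℝ) ≤ 2*x := le_trans hMv hv2x
  -- Step 1 : pointwise identity
  have hSphi : Set.EqOn Sphi
      (fun t => ∑ j ∈ Finset.Icc 1 M, Aux17.b j * ((⌊t/(j:ℝ)⌋ : ℤ):ℝ))
      (Set.uIcc x v) := by
    intro t ht
    rw [Set.uIcc_of_le hxv, Set.mem_Icc] at ht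
    have ht0 : (0:ℝ) ≤ t := by linarith [ht.1]
    rw [Aux17.sphi_eq t ht0 M (Nat.floor_le_floor ht.2)]
    apply Finset.sum_congr rfl
    intro j hj
    congr 1
    exact natCast_floor_eq_intCast_floor (by positivity)
  -- Step 2 : integrate
  have hjpos : ∀ j ∈ Finset.Icc 1 M, (0:ℝ) < (j:ℝ) := by
    intro j hj
    rw [Finset.mem_Icc] at hj
    exact_mod_cast hj.1
  have hfloor_int : ∀ j ∈ Finset.Icc 1 M,
      IntervalIntegrable (fun t => ((⌊t/(j:ℝ)⌋ : ℤ):ℝ)) MeasureTheory.volume x v := by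
    intro j hj
    apply Monotone.intervalIntegrable
    intro s1 s2 hs
    have : ⌊s1/(j:ℝ)⌋ ≤ ⌊s2/(j:ℝ)⌋ := Int.floor_mono (by
      have := hjpos j hj
      gcongr)
    show ((⌊s1/(j:ℝ)⌋:ℤ):ℝ) ≤ ((⌊s2/(j:ℝ)⌋:ℤ):ℝ)
    exact_mod_cast this
  have key : (∫ t in x..v, Sphi t)
      = ∑ j ∈ Finset.Icc 1 M, Aux17.b j * (Aux17.P (j:ℝ) v - Aux17.P (j:ℝ) x) := by
    rw [intervalIntegral.integral_congr hSphi]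
    rw [intervalIntegral.integral_finset_sum
      (fun j hj => (hfloor_int j hj).const_mul (Aux17.b j))]
    apply Finset.sum_congr rfl
    intro j hj
    rw [intervalIntegral.integral_const_mul]
    congr 1
    exact Aux17.integral_floor (j:ℝ) x v (hjpos j hj) hxv
  -- Step 3 : algebra
  set SM := ∑ j ∈ Finset.Icc 1 M, Aux17.b j * (1/(j:ℝ)) with hSM
  set Ty : ℝ → ℝ := fun y => ∑ j ∈ Finset.Icc 1 M, Aux17.b j * ((j:ℝ) * Aux17.G (y/(j:ℝ)))
    with hTy
  set phiM := ((Nat.totient M : ℕ) : ℝ) with hphiM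
  have hexp : ∀ y : ℝ, ∑ j ∈ Finset.Icc 1 M, Aux17.b j * (Aux17.P (j:ℝ) y)
      = y^2/2 * SM - y/2 * phiM - (1/2) * Ty y := by
    intro y
    rw [hSM, hTy, hphiM, ← Aux17.sum_b M, Finset.mul_sum, Finset.mul_sum, Finset.mul_sum,
      ← Finset.sum_sub_distrib, ← Finset.sum_sub_distrib]
    apply Finset.sum_congr rfl
    intro j hj
    have hj0 := hjpos j hj
    unfold Aux17.P
    field_simp
  have key2 : (∫ t in x..v, Sphi t)
      = (v^2 - x^2)/2 * SM - (v-x)/2 * phiM - (1/2) * (Ty v - Ty x) := by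
    rw [key]
    have e : ∑ j ∈ Finset.Icc 1 M, Aux17.b j * (Aux17.P (j:ℝ) v - Aux17.P (j:ℝ) x)
        = (∑ j ∈ Finset.Icc 1 M, Aux17.b j * (Aux17.P (j:ℝ) v))
          - ∑ j ∈ Finset.Icc 1 M, Aux17.b j * (Aux17.P (j:ℝ) x) := by
      rw [← Finset.sum_sub_distrib]
      apply Finset.sum_congr rfl
      intro j _
      ring
    rw [e, hexp v, hexp x]
    ring
  -- Step 4 : bounds
  set L := Real.log x with hL
  set LM := Real.log (M:ℝ) with hLM
  set K := 6/Real.pi^2 with hK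
  have hpi3 : (3:ℝ) < Real.pi := Real.pi_gt_three
  have hK0 : 0 < K := by rw [hK]; positivity
  have hK1 : K ≤ 1 := by
    rw [hK, div_le_one (by positivity)]
    nlinarith
  have hlog2 : Real.log 2 ≤ 1 := by
    have := Real.log_le_sub_one_of_pos (show (0:ℝ) < 2 by norm_num)
    linarith
  have hlog2pos : 0 < Real.log 2 := Real.log_pos (by norm_num)
  have hL2 : Real.log 2 ≤ L := Real.log_le_log (by norm_num) hx
  have hL0 : 0 < L := lt_of_lt_of_le hlog2pos hL2
  have hLM0 : 0 ≤ LM := Real.log_nonneg (by exact_mod_cast Nat.one_le_of_lt hM2)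
  have hLML : L ≤ LM := Real.log_le_log hx0 hxM
  have hLM2 : LM ≤ 2*L := by
    have h2 : LM ≤ Real.log (2*x) := Real.log_le_log (by positivity) hM2x
    rw [Real.log_mul (by norm_num) (by positivity)] at h2
    linarith
  have hLMdiff : LM - L ≤ 1 := by
    have h2 : LM ≤ Real.log (2*x) := Real.log_le_log (by positivity) hM2x
    rw [Real.log_mul (by norm_num) (by positivity)] at h2
    linarith
  have hTv : |Ty v| ≤ 7*x^2 := by
    rw [hTy]
    exact Aux17.T_bound M v x hv0.le hv2x hM2x (by linarith)
  have hTx : |Ty x| ≤ 7*x^2 := by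
    rw [hTy]
    exact Aux17.T_bound M x x hx0.le (by linarith) hM2x (by linarith)
  have hSMb : |SM - K*LM| ≤ 12 := by
    have := Aux17.SM_bound M hM2
    rw [hSM, hK, hLM]
    exact this
  have hphiMb : 0 ≤ phiM ∧ phiM ≤ 2*x := by
    constructor
    · rw [hphiM]; positivity
    · rw [hphiM]
      exact le_trans (Aux17.A_le M) hM2x
  clear_value v M SM Ty phiM L LM K
  -- main rewriting
  have hmain : h * x * L / (Real.pi ^ 2 / 6) = K * (h*x*L) := by
    rw [hK]
    field_simp
  have decomp : (v^2 - x^2)/2 * SM - (v-x)/2 * phiM - (1/2) * (Ty v - Ty x) - K*(h*x*L)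
      = (h*x + h^2/2) * (SM - K*LM) + (h*x)*(K*(LM - L)) + (h^2/2)*(K*LM)
        - (h/2)*phiM - (1/2)*(Ty v - Ty x) := by
    rw [hv]
    ring
  rw [key2, hmain, decomp]
  have hx2 : (0:ℝ) ≤ x^2 := sq_nonneg x
  have hh2L : (0:ℝ) ≤ h^2*L := mul_nonneg (sq_nonneg h) hL0.le
  have c1 : |(h*x + h^2/2) * (SM - K*LM)| ≤ 18*x^2 := by
    rw [abs_mul, abs_of_nonneg (by nlinarith : (0:ℝ) ≤ h*x + h^2/2)]
    have b1 : h*x + h^2/2 ≤ (3/2)*x^2 := by nlinarith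
    calc (h*x + h^2/2) * |SM - K*LM| ≤ ((3/2)*x^2) * 12 :=
        mul_le_mul b1 hSMb (abs_nonneg _) (by positivity)
      _ = 18*x^2 := by ring
  have c2 : |(h*x)*(K*(LM - L))| ≤ x^2 := by
    rw [abs_mul, abs_of_nonneg (by nlinarith : (0:ℝ) ≤ h*x)]
    have e2 : |K*(LM-L)| ≤ 1 := by
      rw [abs_of_nonneg (by nlinarith [hK0.le, hLML] : (0:ℝ) ≤ K*(LM-L))]
      nlinarith [hLMdiff, hK1, hK0.le, hLML]
    calc (h*x)*|K*(LM-L)| ≤ (x*x)*1 :=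
        mul_le_mul (by nlinarith) e2 (abs_nonneg _) (by positivity)
      _ = x^2 := by ring
  have c3 : |(h^2/2)*(K*LM)| ≤ h^2*L := by
    rw [abs_mul, abs_of_nonneg (by positivity : (0:ℝ) ≤ h^2/2),
      abs_of_nonneg (by nlinarith [hK0.le, hLM0] : (0:ℝ) ≤ K*LM)]
    have : K*LM ≤ 2*L := by nlinarith [hLM2, hK1, hK0.le, hLM0]
    nlinarith [sq_nonneg h]
  have c4 : |(h/2)*phiM| ≤ x^2 := by
    rw [abs_mul, abs_of_nonneg (by nlinarith : (0:ℝ) ≤ h/2),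
      abs_of_nonneg hphiMb.1]
    nlinarith [hphiMb.2, hphiMb.1]
  have c5 : |(1/2)*(Ty v - Ty x)| ≤ 7*x^2 := by
    rw [abs_mul, abs_of_nonneg (by norm_num : (0:ℝ) ≤ (1/2:ℝ))]
    have htri : |Ty v - Ty x| ≤ |Ty v| + |Ty x| := abs_sub _ _
    linarith [hTv, hTx, htri]
  have d1 := abs_le.mp c1
  have d2 := abs_le.mp c2
  have d3 := abs_le.mp c3
  have d4 := abs_le.mp c4
  have d5 := abs_le.mp c5
  rw [abs_le]
  constructor <;> linarith
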